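/- The Delannoy numbers satisfy the explicit formula a(r,s) = ∑_{i=0}^{min(r,s)} (r choose i) * (s choose i) * 2^i for all natural numbers r, s. -/
import Mathlib


/-- The Delannoy numbers, defined by the standard two-dimensional recurrence. -/
def delannoy : ℕ → ℕ → ℕ
  | 0, 0 => 1
  | 0, s + 1 => delannoy 0 s
  | r + 1, 0 => delannoy r 0
  | r + 1, s + 1 => delannoy r (s + 1) + delannoy (r + 1) s + delannoy r s

def T (r s N : ℕ) : ℕ := ∑ i ∈ Finset.range N, r.choose i * s.choose i * 2 ^ i

lemma T_stable (r s : ℕ) {M N : ℕ} (h : min r s + 1 ≤ M) (h2 : M ≤ N) :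
    T r s N = T r s M := by
  refine (Finset.sum_subset (Finset.range_subset_range.2 h2) ?_).symm
  intro i _ hi
  simp only [Finset.mem_range, not_lt] at hi
  rcases le_or_gt i r with hr | hr
  · have hs : s < i := by omega
    simp [Nat.choose_eq_zero_of_lt hs]
  · simp [Nat.choose_eq_zero_of_lt hr]

lemma key (r s N : ℕ) :
    T (r+1) (s+1) (N+1) + 2 * T r s (N+1) =
      T r (s+1) (N+1) + T (r+1) s (N+1) + T r s (N+1) + 2 * T r s N := by
  unfold T
  rw [Finset.sum_range_succ' (fun i => (r+1).choose i * (s+1).choose i * 2 ^ i) N,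
      Finset.sum_range_succ' (fun i => r.choose i * s.choose i * 2 ^ i) N,
      Finset.sum_range_succ' (fun i => r.choose i * (s+1).choose i * 2 ^ i) N,
      Finset.sum_range_succ' (fun i => (r+1).choose i * s.choose i * 2 ^ i) N]
  have H1 : ∑ i ∈ Finset.range N,
      ((r+1).choose (i+1) * (s+1).choose (i+1) * 2 ^ (i+1)
        + 2 * (r.choose (i+1) * s.choose (i+1) * 2 ^ (i+1)))
      = ∑ i ∈ Finset.range N,
      (r.choose (i+1) * (s+1).choose (i+1) * 2 ^ (i+1)
        + (r+1).choose (i+1) * s.choose (i+1) * 2 ^ (i+1)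
        + (r.choose (i+1) * s.choose (i+1) * 2 ^ (i+1)
          + 2 * (r.choose i * s.choose i * 2 ^ i))) := by
    refine Finset.sum_congr rfl fun i _ => ?_
    simp only [Nat.choose_succ_succ, pow_succ]
    ring
  simp only [Finset.sum_add_distrib, Finset.mul_sum, mul_add] at H1 ⊢
  simp only [Nat.choose_zero_right, pow_zero]
  omega

lemma delannoy_T : ∀ r s N : ℕ, min r s + 1 ≤ N → delannoy r s = T r s N := by
  intro r
  induction r with
  | zero =>
    intro s
    induction s with
    | zero =>
      intro N hN
      have h : T 0 0 N = T 0 0 1 := T_stable 0 0 (by omega) hN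
      rw [h]
      simp [delannoy, T]
    | succ s ih =>
      intro N hN
      have h1 : T 0 (s+1) N = T 0 (s+1) 1 := T_stable 0 (s+1) (by simp) hN
      have h2 : delannoy 0 s = T 0 s 1 := ih 1 (by simp)
      rw [h1]
      simp only [delannoy]
      rw [h2]
      simp [T]
  | succ r ihr =>
    intro s
    induction s with
    | zero =>
      intro N hN
      have h1 : T (r+1) 0 N = T (r+1) 0 1 := T_stable (r+1) 0 (by simp) hN
      have h2 : delannoy r 0 = T r 0 1 := ihr 0 1 (by simp)
      rw [h1]
      simp only [delannoy]
      rw [h2]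
      simp [T]
    | succ s ihs =>
      intro N hN
      have big : min (r+1) (s+1) + 1 ≤ r + s + 3 := by omega
      have hstab : T (r+1) (s+1) N = T (r+1) (s+1) (r+s+3) := by
        rcases le_total N (r+s+3) with h | h
        · rw [T_stable (r+1) (s+1) hN h, T_stable (r+1) (s+1) hN (le_refl N)]
        · exact T_stable (r+1) (s+1) big h
      rw [hstab]
      have hk := key r s (r+s+2)
      have hc : T r s (r+s+3) = T r s (r+s+2) := T_stable r s (by omega) (by omega)
      have e1 : delannoy r (s+1) = T r (s+1) (r+s+3) := ihr (s+1) _ (by omega)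
      have e2 : delannoy (r+1) s = T (r+1) s (r+s+3) := ihs _ (by omega)
      have e3 : delannoy r s = T r s (r+s+3) := ihr s _ (by omega)
      simp only [delannoy]
      rw [e1, e2, e3]
      have : r + s + 3 = (r + s + 2) + 1 := rfl
      rw [this] at hc ⊢
      omega

theorem delannoy_explicit (r s : ℕ) :
    delannoy r s =
      ∑ i ∈ Finset.range (min r s + 1), r.choose i * s.choose i * 2 ^ i := by
  exact delannoy_T r s (min r s + 1) le_rfl
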